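/- Let A ⊆ ℕ₀ be a finite 3-free set, S(A) the Stanley sequence generated by A, and S(A,x) its counting function. Then for every ε > 0 there exists x₀ = x₀(ε, A) such that for all x ≥ x₀, S(A,x) ≥ (√2 − ε)√x. -/
import Mathlib


/-- A set of nonnegative integers is 3-free if it contains no three-term
arithmetic progression `a < b < c` with `a + c = 2b`. -/
def ThreeFree (S : Set ℕ) : Prop :=
  ∀ a ∈ S, ∀ b ∈ S, ∀ c ∈ S, a < b → b < c → a + c ≠ 2 * b

/-- `stanleyBelow A n` is the set of elements of the Stanley sequence generated by `A`
that are smaller than `n`: at stage `n` we include `n` itself if `n ∈ A`, or if `n`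
exceeds every element of `A` and adjoining `n` to everything chosen so far stays 3-free
(the greedy rule). -/
def stanleyBelow (A : Finset ℕ) : ℕ → Set ℕ
  | 0 => ∅
  | n + 1 => stanleyBelow A n ∪
      {m | m = n ∧ (n ∈ A ∨ ((∀ a ∈ A, a < n) ∧ ThreeFree (stanleyBelow A n ∪ {n})))}

/-- The Stanley sequence `S(A)` generated by `A`, as a set of nonnegative integers. -/
def stanley (A : Finset ℕ) : Set ℕ := ⋃ n, stanleyBelow A n

/-- The counting function `S(A,x) = #{s ∈ S(A) : s ≤ x}`. -/
noncomputable def stanleyCount (A : Finset ℕ) (x : ℝ) : ℕ :=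
  Nat.card {s : ℕ | s ∈ stanley A ∧ (s : ℝ) ≤ x}

/-- `H S n = #{(s₁,s₂) : s₁,s₂ ∈ S, s₁ < s₂, n = 2s₂ - s₁}`. -/
noncomputable def H (S : Set ℕ) (n : ℕ) : ℕ :=
  Nat.card {p : ℕ × ℕ | p.1 ∈ S ∧ p.2 ∈ S ∧ p.1 < p.2 ∧ n + p.1 = 2 * p.2}

lemma threeFree_mono {S T : Set ℕ} (h : S ⊆ T) (hT : ThreeFree T) : ThreeFree S :=
  fun a ha b hb c hc h1 h2 => hT a (h ha) b (h hb) c (h hc) h1 h2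

lemma sb_lt (A : Finset ℕ) : ∀ n, ∀ m ∈ stanleyBelow A n, m < n := by
  intro n
  induction n with
  | zero => intro m hm; exact absurd hm (by simp [stanleyBelow])
  | succ n ih =>
    intro m hm
    rcases hm with hm | hm
    · exact (ih m hm).trans (Nat.lt_succ_self n)
    · exact hm.1 ▸ Nat.lt_succ_self n

lemma sb_mono (A : Finset ℕ) {m n : ℕ} (h : m ≤ n) :
    stanleyBelow A m ⊆ stanleyBelow A n := by
  induction n with
  | zero => simp_all
  | succ n ih =>
    rcases Nat.lt_or_ge m (n+1) with h' | h'
    · exact (ih (Nat.lt_succ_iff.mp h')).trans Set.subset_union_left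
    · have : m = n + 1 := le_antisymm h h'
      subst this; rfl

lemma mem_sb_self {A : Finset ℕ} {k n : ℕ} (h : k ∈ stanleyBelow A n) :
    k ∈ stanleyBelow A (k + 1) := by
  induction n with
  | zero => exact absurd h (by simp [stanleyBelow])
  | succ n ih =>
    rcases h with h | h
    · exact ih h
    · rw [h.1]; exact Or.inr ⟨rfl, h.2⟩

lemma mem_stanley_iff {A : Finset ℕ} {k : ℕ} :
    k ∈ stanley A ↔ k ∈ stanleyBelow A (k + 1) := by
  constructor
  · intro h
    rcases Set.mem_iUnion.mp h with ⟨n, hn⟩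
    exact mem_sb_self hn
  · intro h
    exact Set.mem_iUnion.mpr ⟨k + 1, h⟩

lemma sb_mem_cases {A : Finset ℕ} : ∀ n, ∀ m ∈ stanleyBelow A n,
    m ∈ A ∨ ∀ a ∈ A, a < m := by
  intro n
  induction n with
  | zero => intro m hm; exact absurd hm (by simp [stanleyBelow])
  | succ n ih =>
    intro m hm
    rcases hm with hm | hm
    · exact ih m hm
    · rcases hm.2 with h | h
      · exact Or.inl (hm.1 ▸ h)
      · exact Or.inr (hm.1 ▸ h.1)

lemma sb_succ_subset (A : Finset ℕ) (n : ℕ) :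
    stanleyBelow A (n + 1) ⊆ stanleyBelow A n ∪ {n} := by
  intro m hm
  rcases hm with hm | hm
  · exact Or.inl hm
  · exact Or.inr hm.1

lemma sb_threeFree {A : Finset ℕ} (hA3 : ThreeFree ↑A) :
    ∀ n, ThreeFree (stanleyBelow A n) := by
  intro n
  induction n with
  | zero => intro a ha; exact absurd ha (by simp [stanleyBelow])
  | succ n ih =>
    by_cases hc : n ∈ A ∨ ((∀ a ∈ A, a < n) ∧ ThreeFree (stanleyBelow A n ∪ {n}))
    · rcases hc with hc | hc
      · -- everything so far is in A
        refine threeFree_mono (sb_succ_subset A n) (threeFree_mono ?_ hA3)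
        intro m hm
        rcases hm with hm | hm
        · rcases sb_mem_cases n m hm with h | h
          · exact h
          · exact absurd (h n hc) (Nat.lt_asymm (sb_lt A n m hm))
        · exact hm ▸ hc
      · exact threeFree_mono (sb_succ_subset A n) hc.2
    · refine threeFree_mono ?_ ih
      intro m hm
      rcases hm with hm | hm
      · exact hm
      · exact absurd hm.2 hc

lemma stanley_threeFree {A : Finset ℕ} (hA3 : ThreeFree ↑A) :
    ThreeFree (stanley A) := by
  intro a ha b hb c hc h1 h2
  have ha' := mem_stanley_iff.mp ha
  have hb' := mem_stanley_iff.mp hb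
  have hc' := mem_stanley_iff.mp hc
  have N := max (a+1) (max (b+1) (c+1))
  exact sb_threeFree hA3 (max (a+1) (max (b+1) (c+1))) a
    (sb_mono A (le_max_left _ _) ha') b
    (sb_mono A ((le_max_left _ _).trans (le_max_right _ _)) hb') c
    (sb_mono A ((le_max_right _ _).trans (le_max_right _ _)) hc') h1 h2

lemma blocked {A : Finset ℕ} (hA3 : ThreeFree ↑A) {n : ℕ}
    (hM : ∀ a ∈ A, a < n) (hn : n ∉ stanley A) :
    ∃ s1 s2 : ℕ, s1 ∈ stanley A ∧ s2 ∈ stanley A ∧ s1 < s2 ∧ n + s1 = 2 * s2 := by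
  have h1 : n ∉ stanleyBelow A (n + 1) := fun h => hn (mem_stanley_iff.mpr h)
  have h2 : ¬ ThreeFree (stanleyBelow A n ∪ {n}) := by
    intro h3
    exact h1 (Or.inr ⟨rfl, Or.inr ⟨hM, h3⟩⟩)
  unfold ThreeFree at h2
  push_neg at h2
  obtain ⟨a, ha, b, hb, c, hc, hab, hbc, habc⟩ := h2
  -- members of stanleyBelow A n are < n; the union adds only n itself
  have hlt : ∀ m ∈ stanleyBelow A n ∪ ({n} : Set ℕ), m ≤ n := by
    intro m hm
    rcases hm with hm | hm
    · exact le_of_lt (sb_lt A n m hm)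
    · exact le_of_eq hm
  have hcn : c = n := by
    by_contra hcn
    have hc' : c ∈ stanleyBelow A n := by
      rcases hc with h | h
      · exact h
      · exact absurd h hcn
    have hb' : b ∈ stanleyBelow A n := by
      rcases hb with h | h
      · exact h
      · exact absurd (h ▸ hbc) (Nat.lt_asymm (sb_lt A n c hc'))
    have ha' : a ∈ stanleyBelow A n := by
      rcases ha with h | h
      · exact h
      · exact absurd (h ▸ (hab.trans hbc)) (Nat.lt_asymm (sb_lt A n c hc'))
    exact sb_threeFree hA3 n a ha' b hb' c hc' hab hbc habc
  subst hcn
  have hb' : b ∈ stanleyBelow A c := by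
    rcases hb with h | h
    · exact h
    · rw [Set.mem_singleton_iff] at h; omega
  have ha' : a ∈ stanleyBelow A c := by
    rcases ha with h | h
    · exact h
    · rw [Set.mem_singleton_iff] at h; omega
  exact ⟨a, b, Set.mem_iUnion.mpr ⟨c, ha'⟩, Set.mem_iUnion.mpr ⟨c, hb'⟩, hab, by omega⟩


set_option maxHeartbeats 1000000 in
/-- for every `ε > 0` there is `x₀` such that
`S(A,x) ≥ (√2 - ε)√x` for all `x ≥ x₀`. -/
theorem count_ge_sqrt_two_sub_eps (A : Finset ℕ) (hA3 : ThreeFree ↑A) :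
    ∀ ε : ℝ, 0 < ε → ∃ x₀ : ℝ, ∀ x : ℝ, x₀ ≤ x →
      (Real.sqrt 2 - ε) * Real.sqrt x ≤ (stanleyCount A x : ℝ) := by
  classical
  intro ε hε
  obtain ⟨M, hMdef⟩ : ∃ M : ℕ, M = A.sup id + 1 := ⟨_, rfl⟩
  refine ⟨max ((M:ℝ) + 1) (((Real.sqrt 2 * Real.sqrt M + 1)/ε)^2), ?_⟩
  intro x hx
  have hxM : (M:ℝ) + 1 ≤ x := le_trans (le_max_left _ _) hx
  have hM1 : (1:ℝ) ≤ (M:ℝ) := by exact_mod_cast Nat.one_le_iff_ne_zero.mpr (by omega)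
  have hx0 : (0:ℝ) ≤ x := by linarith
  obtain ⟨N, hNdef⟩ : ∃ N : ℕ, N = ⌊x⌋.toNat + 1 := ⟨_, rfl⟩
  have hflZ : ((⌊x⌋.toNat : ℕ) : ℤ) = ⌊x⌋ := Int.toNat_of_nonneg (Int.floor_nonneg.mpr hx0)
  have hflR : ((⌊x⌋.toNat : ℕ) : ℝ) = ((⌊x⌋ : ℤ) : ℝ) := by exact_mod_cast hflZ
  have hNx : ((N:ℕ):ℝ) = (⌊x⌋:ℝ) + 1 := by rw [hNdef]; push_cast [hflR]; ring
  have hxN : x < (N:ℝ) := by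
    have h1 := Int.lt_floor_add_one x
    linarith [hNx]
  have hMN : M < N := by
    have : (M:ℝ) < (N:ℝ) := by linarith
    exact_mod_cast this
  obtain ⟨K, hKdef⟩ : ∃ K : Finset ℕ, K = (Finset.range N).filter (· ∈ stanley A) := ⟨_, rfl⟩
  obtain ⟨k, hkdef⟩ : ∃ k : ℕ, k = K.card := ⟨_, rfl⟩
  -- elements of K are counted by stanleyCount
  have hsetfin : {s : ℕ | s ∈ stanley A ∧ (s:ℝ) ≤ x}.Finite := by
    apply Set.Finite.subset (Set.finite_Iio N)
    intro s hs
    have : (s:ℝ) < (N:ℝ) := lt_of_le_of_lt hs.2 hxN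
    exact_mod_cast this
  have hkcount : k ≤ stanleyCount A x := by
    rw [stanleyCount, Nat.card_coe_set_eq]
    rw [hkdef, ← Set.ncard_coe_finset K]
    apply Set.ncard_le_ncard ?_ hsetfin
    intro s hs
    rw [Finset.mem_coe, hKdef, Finset.mem_filter, Finset.mem_range] at hs
    refine ⟨hs.2, ?_⟩
    have hsle : s ≤ ⌊x⌋.toNat := by omega
    have hcast : (s:ℝ) ≤ ((⌊x⌋.toNat : ℕ):ℝ) := by exact_mod_cast hsle
    rw [hflR] at hcast
    exact hcast.trans (Int.floor_le x)
  -- counting inequality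
  obtain ⟨T, hTdef⟩ : ∃ T : Finset ℕ, T = Finset.Ico M N := ⟨_, rfl⟩
  obtain ⟨T1, hT1def⟩ : ∃ T1 : Finset ℕ, T1 = T.filter (· ∈ stanley A) := ⟨_, rfl⟩
  obtain ⟨T2, hT2def⟩ : ∃ T2 : Finset ℕ, T2 = T.filter (fun n => ¬ (n ∈ stanley A)) := ⟨_, rfl⟩
  have hsplit : T1.card + T2.card = T.card := by
    rw [hT1def, hT2def]
    exact Finset.card_filter_add_card_filter_not (p := fun n => n ∈ stanley A)
  have hTcard : T.card = N - M := by rw [hTdef]; exact Nat.card_Ico M N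
  have hT1le : T1.card ≤ k := by
    rw [hkdef]
    apply Finset.card_le_card
    intro n hn
    rw [hT1def, Finset.mem_filter, hTdef, Finset.mem_Ico] at hn
    rw [hKdef, Finset.mem_filter, Finset.mem_range]
    exact ⟨hn.1.2, hn.2⟩
  have hblock : ∀ n ∈ T2, ∃ p : ℕ × ℕ,
      p.1 ∈ stanley A ∧ p.2 ∈ stanley A ∧ p.1 < p.2 ∧ n + p.1 = 2 * p.2 := by
    intro n hn
    rw [hT2def, Finset.mem_filter, hTdef, Finset.mem_Ico] at hn
    obtain ⟨⟨hMn, _⟩, hns⟩ := hn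
    have hlt : ∀ a ∈ A, a < n := by
      intro a ha
      have : a ≤ A.sup id := Finset.le_sup (f := id) ha
      omega
    obtain ⟨s1, s2, h1, h2, h3, h4⟩ := blocked hA3 hlt hns
    exact ⟨(s1, s2), h1, h2, h3, h4⟩
  choose! f hf1 hf2 hf3 hf4 using hblock
  have hT2le : T2.card ≤ Nat.choose k 2 := by
    have hmaps : ∀ n ∈ T2, ({(f n).1, (f n).2} : Finset ℕ) ∈ K.powersetCard 2 := by
      intro n hn
      have h1 := hf1 n hn; have h2 := hf2 n hn; have h3 := hf3 n hn; have h4 := hf4 n hn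
      have hnN : n < N := by
        have hn' := hn; rw [hT2def, Finset.mem_filter, hTdef, Finset.mem_Ico] at hn'
        exact hn'.1.2
      have hs2n : (f n).2 < n := by omega
      rw [Finset.mem_powersetCard]
      constructor
      · intro m hm
        rw [Finset.mem_insert, Finset.mem_singleton] at hm
        rw [hKdef, Finset.mem_filter, Finset.mem_range]
        rcases hm with hm | hm
        · subst hm; exact ⟨by omega, h1⟩
        · subst hm; exact ⟨by omega, h2⟩
      · exact Finset.card_pair (Nat.ne_of_lt h3)
    have hinj : Set.InjOn (fun n => ({(f n).1, (f n).2} : Finset ℕ)) ↑T2 := by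
      intro n hn m hm heq
      simp only at heq
      have hn' := Finset.mem_coe.mp hn
      have hm' := Finset.mem_coe.mp hm
      have e1 : (f n).1 ∈ ({(f m).1, (f m).2} : Finset ℕ) := by rw [← heq]; simp
      have e2 : (f n).2 ∈ ({(f m).1, (f m).2} : Finset ℕ) := by rw [← heq]; simp
      rw [Finset.mem_insert, Finset.mem_singleton] at e1 e2
      have h3n := hf3 n hn'; have h4n := hf4 n hn'
      have h3m := hf3 m hm'; have h4m := hf4 m hm'
      omega
    calc T2.card ≤ (K.powersetCard 2).card :=
          Finset.card_le_card_of_injOn _ hmaps hinj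
      _ = Nat.choose k 2 := by rw [Finset.card_powersetCard, hkdef]
  -- assemble the natural-number bound
  have hchoose : Nat.choose k 2 = k * (k - 1) / 2 := Nat.choose_two_right k
  have hkk : k * (k - 1) ≤ k * k := Nat.mul_le_mul_left k (Nat.sub_le k 1)
  have hnat : 2 * (N - M) ≤ 2 * k + k * k := by
    rw [hchoose] at hT2le
    obtain ⟨t, ht⟩ : ∃ t, t = k * (k - 1) := ⟨_, rfl⟩
    obtain ⟨u, hu⟩ : ∃ u, u = k * k := ⟨_, rfl⟩
    rw [← ht] at hT2le hkk
    rw [← hu] at hkk ⊢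
    omega
  -- pass to the reals
  have h6 : 2 * ((N:ℝ) - (M:ℝ)) ≤ 2 * (k:ℝ) + (k:ℝ) * (k:ℝ) := by
    have h6' : ((2*(N-M) : ℕ):ℝ) ≤ ((2*k + k*k : ℕ):ℝ) := Nat.cast_le.mpr hnat
    rw [Nat.cast_mul, Nat.cast_sub hMN.le] at h6'
    push_cast at h6'
    linarith
  have hreal : 2 * (x - (M:ℝ)) ≤ ((k:ℝ) + 1)^2 := by nlinarith
  have hsq : Real.sqrt (2*(x-(M:ℝ))) ≤ (k:ℝ) + 1 := by
    have h7 : Real.sqrt (2*(x-(M:ℝ))) ≤ Real.sqrt (((k:ℝ)+1)^2) := Real.sqrt_le_sqrt hreal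
    rwa [Real.sqrt_sq (by positivity)] at h7
  have hxMpos : (0:ℝ) ≤ x - (M:ℝ) := by linarith
  have hmul : Real.sqrt 2 * Real.sqrt (x - (M:ℝ)) ≤ (k:ℝ) + 1 := by
    rwa [Real.sqrt_mul (by norm_num : (0:ℝ) ≤ 2)] at hsq
  have hsub : Real.sqrt x ≤ Real.sqrt (x - (M:ℝ)) + Real.sqrt (M:ℝ) := by
    have hMnn : (0:ℝ) ≤ (M:ℝ) := by positivity
    have h8 : x ≤ (Real.sqrt (x-(M:ℝ)) + Real.sqrt (M:ℝ))^2 := by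
      have e1 := Real.sq_sqrt hxMpos
      have e2 := Real.sq_sqrt hMnn
      nlinarith [Real.sqrt_nonneg (x-(M:ℝ)), Real.sqrt_nonneg ((M:ℝ))]
    calc Real.sqrt x ≤ Real.sqrt ((Real.sqrt (x-(M:ℝ)) + Real.sqrt (M:ℝ))^2) :=
          Real.sqrt_le_sqrt h8
      _ = _ := Real.sqrt_sq (by positivity)
  have heps : Real.sqrt 2 * Real.sqrt (M:ℝ) + 1 ≤ ε * Real.sqrt x := by
    have h9 : ((Real.sqrt 2 * Real.sqrt (M:ℝ) + 1)/ε)^2 ≤ x := le_trans (le_max_right _ _) hx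
    have hnn : 0 ≤ (Real.sqrt 2 * Real.sqrt (M:ℝ) + 1)/ε := by positivity
    have h10 : (Real.sqrt 2 * Real.sqrt (M:ℝ) + 1)/ε ≤ Real.sqrt x := by
      calc (Real.sqrt 2 * Real.sqrt (M:ℝ) + 1)/ε
          = Real.sqrt (((Real.sqrt 2 * Real.sqrt (M:ℝ) + 1)/ε)^2) := (Real.sqrt_sq hnn).symm
        _ ≤ Real.sqrt x := Real.sqrt_le_sqrt h9
    calc Real.sqrt 2 * Real.sqrt (M:ℝ) + 1
        = ((Real.sqrt 2 * Real.sqrt (M:ℝ) + 1)/ε) * ε := by field_simp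
      _ ≤ Real.sqrt x * ε := mul_le_mul_of_nonneg_right h10 hε.le
      _ = ε * Real.sqrt x := mul_comm _ _
  have hfin : (Real.sqrt 2 - ε) * Real.sqrt x ≤ (k:ℝ) := by
    have h11 : Real.sqrt 2 * Real.sqrt x ≤
        Real.sqrt 2 * (Real.sqrt (x-(M:ℝ)) + Real.sqrt (M:ℝ)) :=
      mul_le_mul_of_nonneg_left hsub (Real.sqrt_nonneg 2)
    nlinarith [hmul, heps, h11]
  calc (Real.sqrt 2 - ε) * Real.sqrt x ≤ (k:ℝ) := hfin
    _ ≤ (stanleyCount A x : ℝ) := Nat.cast_le.mpr hkcount
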